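/- Let ζ ∈ (0,1) and let (α_k)_{k∈ℕ} be positive reals with α_k = Θ((k+1)^{−1}), i.e., there exist 0 < c₁ ≤ c₂ with c₁/(k+1) ≤ α_k ≤ c₂/(k+1) for all k. Define the window indices s_0 := 0 and s_{t+1} := the least k > s_t such that Σ_{i=s_t}^{k} α_i > α_{s_t}^{ζ}, and set a_t := Σ_{k=s_t}^{s_{t+1}−1} α_k. Then s_t = Θ((t+1)^{1/ζ}), a_t = Θ((t+1)^{−1}), and a_t = Θ(α_{s_t}^{ζ}); that is, there exist positive constants C₁ ≤ C₂, D₁ ≤ D₂, E₁ ≤ E₂ such that for all sufficiently large t, C₁(t+1)^{1/ζ} ≤ s_t ≤ C₂(t+1)^{1/ζ}, D₁(t+1)^{−1} ≤ a_t ≤ D₂(t+1)^{−1}, and E₁α_{s_t}^{ζ} ≤ a_t ≤ E₂α_{s_t}^{ζ}. -/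

import Mathlib

open Real Finset Filter

lemma aux_exp_le {z : ℝ} (h0 : 0 ≤ z) (h1 : z ≤ 1) :
    Real.exp z ≤ 1 + Real.exp 1 * z := by
  have h2 : (-z) + 1 ≤ Real.exp (-z) := Real.add_one_le_exp (-z)
  have h3 : Real.exp (-z) * Real.exp z = 1 := by
    rw [← Real.exp_add]; simp
  have h4 : Real.exp z ≤ Real.exp 1 := Real.exp_le_exp.mpr h1
  have h5 : 0 < Real.exp z := Real.exp_pos z
  nlinarith [mul_le_mul_of_nonneg_right h2 h5.le]

lemma aux_one_le_log (n : ℕ) (hn : 1 ≤ n) :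
    1 / ((n : ℝ) + 1) ≤ Real.log (((n : ℝ) + 1) / n) := by
  have hn' : (1:ℝ) ≤ n := by exact_mod_cast hn
  have h := Real.log_le_sub_one_of_pos (show (0:ℝ) < (n:ℝ)/((n:ℝ)+1) by positivity)
  have h2 : ((n:ℝ)+1)/(n:ℝ) = ((n:ℝ)/((n:ℝ)+1))⁻¹ := by rw [inv_div]
  rw [h2, Real.log_inv]
  have h3 : (n:ℝ)/((n:ℝ)+1) - 1 = -(1/((n:ℝ)+1)) := by field_simp; ring
  linarith [h3 ▸ h]

lemma aux_log_le (k : ℕ) :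
    Real.log (((k : ℝ) + 2) / ((k : ℝ) + 1)) ≤ 1 / ((k : ℝ) + 1) := by
  have h := Real.log_le_sub_one_of_pos (x := ((k : ℝ) + 2) / ((k : ℝ) + 1)) (by positivity)
  have : ((k : ℝ) + 2) / ((k : ℝ) + 1) - 1 = 1 / ((k:ℝ)+1) := by field_simp; ring
  linarith [this ▸ h]

lemma harmonic_lb (m n : ℕ) (h : m ≤ n) :
    Real.log (((n:ℝ)+1) / ((m:ℝ)+1)) ≤ ∑ k ∈ Finset.Ico m n, 1/((k:ℝ)+1) := by
  induction n, h using Nat.le_induction with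
  | base => simp [div_self (show ((m:ℝ)+1) ≠ 0 by positivity)]
  | succ n hmn ih =>
    rw [Finset.sum_Ico_succ_top hmn]
    have key : Real.log (((n:ℝ)+1+1) / ((m:ℝ)+1)) =
        Real.log (((n:ℝ)+1) / ((m:ℝ)+1)) + Real.log (((n:ℝ)+2) / ((n:ℝ)+1)) := by
      rw [← Real.log_mul (by positivity) (by positivity)]
      congr 1
      field_simp
      ring
    push_cast
    rw [key]
    have := aux_log_le n
    linarith

lemma harmonic_ub (m n : ℕ) (h : m < n) :
    ∑ k ∈ Finset.Ico m n, 1/((k:ℝ)+1) ≤ 1/((m:ℝ)+1) + Real.log ((n:ℝ) / ((m:ℝ)+1)) := by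
  induction n, h using Nat.le_induction with
  | base =>
    rw [Finset.sum_Ico_succ_top (le_refl m), Finset.Ico_self, Finset.sum_empty]
    push_cast
    rw [div_self (by positivity), Real.log_one]
    simp
  | succ n hmn ih =>
    rw [Finset.sum_Ico_succ_top (le_of_lt hmn)]
    have hn1 : 1 ≤ n := le_trans (Nat.succ_le_of_lt (Nat.lt_of_lt_of_le (Nat.zero_lt_succ m) hmn)) (le_refl _)
    have key : Real.log (((n:ℝ)+1) / ((m:ℝ)+1)) =
        Real.log ((n:ℝ) / ((m:ℝ)+1)) + Real.log (((n:ℝ)+1) / (n:ℝ)) := by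
      have hn0 : (0:ℝ) < n := by exact_mod_cast hn1
      rw [← Real.log_mul (by positivity) (by positivity)]
      congr 1
      field_simp
    have h2 := aux_one_le_log n hn1
    push_cast
    rw [key]
    linarith

set_option maxHeartbeats 1000000 in
theorem window_index_growth (ζ : ℝ) (hζ : ζ ∈ Set.Ioo (0 : ℝ) 1)
    (α : ℕ → ℝ) (hαpos : ∀ k, 0 < α k)
    (hΘ : ∃ c₁ c₂ : ℝ, 0 < c₁ ∧ c₁ ≤ c₂ ∧ ∀ k : ℕ,
      c₁ / ((k : ℝ) + 1) ≤ α k ∧ α k ≤ c₂ / ((k : ℝ) + 1))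
    (s : ℕ → ℕ) (hs0 : s 0 = 0)
    (hs : ∀ t, IsLeast
      {k : ℕ | s t < k ∧ (α (s t)) ^ ζ < ∑ i ∈ Finset.Icc (s t) k, α i} (s (t + 1)))
    (a : ℕ → ℝ) (ha : ∀ t, a t = ∑ k ∈ Finset.Ico (s t) (s (t + 1)), α k) :
    ∃ C₁ C₂ D₁ D₂ E₁ E₂ : ℝ,
      0 < C₁ ∧ C₁ ≤ C₂ ∧ 0 < D₁ ∧ D₁ ≤ D₂ ∧ 0 < E₁ ∧ E₁ ≤ E₂ ∧
      ∃ T : ℕ, ∀ t ≥ T,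
        (C₁ * ((t : ℝ) + 1) ^ (1 / ζ) ≤ (s t : ℝ) ∧
          (s t : ℝ) ≤ C₂ * ((t : ℝ) + 1) ^ (1 / ζ)) ∧
        (D₁ * ((t : ℝ) + 1)⁻¹ ≤ a t ∧ a t ≤ D₂ * ((t : ℝ) + 1)⁻¹) ∧
        (E₁ * (α (s t)) ^ ζ ≤ a t ∧ a t ≤ E₂ * (α (s t)) ^ ζ) := by
  obtain ⟨c₁, c₂, hc₁, hc12, hα⟩ := hΘ
  obtain ⟨hζ0, hζ1⟩ := hζ
  have hc₂ : (0:ℝ) < c₂ := lt_of_lt_of_le hc₁ hc12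
  -- basic monotonicity
  have hsmono : ∀ t, s t < s (t+1) := fun t => (hs t).1.1
  have hts : ∀ t, t ≤ s t := by
    intro t
    induction t with
    | zero => simp
    | succ n ih => exact Nat.succ_le_of_lt (lt_of_le_of_lt ih (hsmono n))
  have hx1 : ∀ t : ℕ, ((t:ℝ)+1) ≤ (s t : ℝ) + 1 := by
    intro t
    have h := hts t
    have : (t:ℝ) ≤ (s t : ℝ) := by exact_mod_cast h
    linarith
  have hxpos : ∀ t : ℕ, (0:ℝ) < (s t : ℝ) + 1 := fun t =>
    lt_of_lt_of_le (by positivity) (hx1 t)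
  have hypos : ∀ t : ℕ, (0:ℝ) < ((s t : ℝ) + 1) ^ ζ := fun t =>
    Real.rpow_pos_of_pos (hxpos t) ζ
  have hxmono : ∀ t : ℕ, ((s t:ℝ)+1) ≤ ((s (t+1):ℝ)+1) := by
    intro t
    have h := (hsmono t).le
    have : (s t:ℝ) ≤ (s (t+1):ℝ) := by exact_mod_cast h
    linarith
  -- sum over Icc splits
  have hsplit : ∀ t, (∑ i ∈ Finset.Icc (s t) (s (t+1)), α i) = a t + α (s (t+1)) := by
    intro t
    rw [ha t, ← Finset.Ico_add_one_right_eq_Icc, Finset.sum_Ico_succ_top (le_of_lt (hsmono t))]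
  have hAlb : ∀ t, α (s t) ^ ζ - α (s (t+1)) < a t := by
    intro t
    have h2 := (hs t).1.2
    rw [hsplit t] at h2
    linarith
  have hAub : ∀ t, c₂ ≤ (s t:ℝ)+1 → a t ≤ α (s t) ^ ζ := by
    intro t hc
    rcases eq_or_lt_of_le (Nat.succ_le_of_lt (hsmono t)) with heq | hlt
    · have hsing : Finset.Ico (s t) ((s t).succ) = {s t} := by
        rw [Nat.succ_eq_add_one, Finset.Ico_add_one_right_eq_Icc, Finset.Icc_self]
      rw [ha t, ← heq, hsing, Finset.sum_singleton]
      have hle1 : α (s t) ≤ 1 := by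
        have h1 := (hα (s t)).2
        have h2 : c₂ / ((s t : ℝ)+1) ≤ 1 := by
          rw [div_le_one (hxpos t)]; exact hc
        linarith
      calc α (s t) = α (s t) ^ (1:ℝ) := (Real.rpow_one _).symm
        _ ≤ α (s t) ^ ζ := Real.rpow_le_rpow_of_exponent_ge (hαpos (s t)) hle1 (le_of_lt hζ1)
    · have hk : s t < s (t+1) - 1 := by omega
      have hnotin : s (t+1) - 1 ∉ {k : ℕ | s t < k ∧ (α (s t)) ^ ζ < ∑ i ∈ Finset.Icc (s t) k, α i} := by
        intro hmem
        have := (hs t).2 hmem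
        omega
      simp only [Set.mem_setOf_eq, not_and, not_lt] at hnotin
      have h3 := hnotin hk
      have h4 : Finset.Icc (s t) (s (t+1) - 1) = Finset.Ico (s t) (s (t+1)) := by
        rw [← Finset.Ico_add_one_right_eq_Icc]
        congr 1
        omega
      rw [h4] at h3
      rw [ha t]
      exact h3
  -- comparison with harmonic sums
  have haub' : ∀ t, a t ≤ c₂ * (1/((s t:ℝ)+1) +
      (Real.log ((s (t+1):ℝ)+1) - Real.log ((s t:ℝ)+1))) := by
    intro t
    have hsum : a t ≤ c₂ * ∑ k ∈ Finset.Ico (s t) (s (t+1)), 1/((k:ℝ)+1) := by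
      rw [ha t, Finset.mul_sum]
      apply Finset.sum_le_sum
      intro k _
      rw [mul_one_div]
      exact (hα k).2
    have hh := harmonic_ub (s t) (s (t+1)) (hsmono t)
    have hn0 : (0:ℝ) < (s (t+1):ℝ) := by
      have h := Nat.lt_of_le_of_lt (Nat.zero_le _) (hsmono t)
      exact_mod_cast h
    have hlog1 : Real.log ((s (t+1):ℝ)/((s t:ℝ)+1)) =
        Real.log (s (t+1):ℝ) - Real.log ((s t:ℝ)+1) :=
      Real.log_div (ne_of_gt hn0) (ne_of_gt (hxpos t))
    have hlog2 : Real.log (s (t+1):ℝ) ≤ Real.log ((s (t+1):ℝ)+1) :=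
      Real.log_le_log hn0 (by linarith)
    rw [hlog1] at hh
    calc a t ≤ c₂ * ∑ k ∈ Finset.Ico (s t) (s (t+1)), 1/((k:ℝ)+1) := hsum
      _ ≤ c₂ * (1/((s t:ℝ)+1) + (Real.log ((s (t+1):ℝ)+1) - Real.log ((s t:ℝ)+1))) := by
        apply mul_le_mul_of_nonneg_left _ hc₂.le
        linarith
  have halb' : ∀ t, c₁ * (Real.log ((s (t+1):ℝ)+1) - Real.log ((s t:ℝ)+1)) ≤ a t := by
    intro t
    have hsum : c₁ * ∑ k ∈ Finset.Ico (s t) (s (t+1)), 1/((k:ℝ)+1) ≤ a t := by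
      rw [ha t, Finset.mul_sum]
      apply Finset.sum_le_sum
      intro k _
      rw [mul_one_div]
      exact (hα k).1
    have hh := harmonic_lb (s t) (s (t+1)) (hsmono t).le
    have hlog1 : Real.log (((s (t+1):ℝ)+1)/((s t:ℝ)+1)) =
        Real.log ((s (t+1):ℝ)+1) - Real.log ((s t:ℝ)+1) :=
      Real.log_div (ne_of_gt (hxpos (t+1))) (ne_of_gt (hxpos t))
    rw [hlog1] at hh
    calc c₁ * (Real.log ((s (t+1):ℝ)+1) - Real.log ((s t:ℝ)+1))
        ≤ c₁ * ∑ k ∈ Finset.Ico (s t) (s (t+1)), 1/((k:ℝ)+1) :=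
          mul_le_mul_of_nonneg_left hh hc₁.le
      _ ≤ a t := hsum
  -- α power bounds
  have hpow_lb : ∀ t, c₁ ^ ζ / ((s t:ℝ)+1) ^ ζ ≤ α (s t) ^ ζ := by
    intro t
    have h := Real.rpow_le_rpow (by positivity) (hα (s t)).1 hζ0.le
    rwa [Real.div_rpow hc₁.le (hxpos t).le] at h
  have hpow_ub : ∀ t, α (s t) ^ ζ ≤ c₂ ^ ζ / ((s t:ℝ)+1) ^ ζ := by
    intro t
    have h := Real.rpow_le_rpow (hαpos (s t)).le (hα (s t)).2 hζ0.le
    rwa [Real.div_rpow hc₂.le (hxpos t).le] at h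
  -- constants
  set A : ℝ := c₁ ^ ζ / (4 * c₂) with hAdef
  set B : ℝ := c₂ ^ ζ / c₁ with hBdef
  have hc1z : (0:ℝ) < c₁ ^ ζ := Real.rpow_pos_of_pos hc₁ ζ
  have hc2z : (0:ℝ) < c₂ ^ ζ := Real.rpow_pos_of_pos hc₂ ζ
  have hApos : (0:ℝ) < A := by positivity
  have hBpos : (0:ℝ) < B := by positivity
  -- thresholds
  have htend1 : Tendsto (fun t:ℕ => ((t:ℝ)+1)) atTop atTop :=
    tendsto_atTop_add_const_right _ 1 tendsto_natCast_atTop_atTop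
  have htend2 : Tendsto (fun t:ℕ => ((t:ℝ)+1)^(1-ζ)) atTop atTop :=
    (tendsto_rpow_atTop (by linarith)).comp htend1
  have htend3 : Tendsto (fun t:ℕ => ((t:ℝ)+1)^ζ) atTop atTop :=
    (tendsto_rpow_atTop hζ0).comp htend1
  have hev : ∀ᶠ t:ℕ in atTop, c₂ ≤ ((t:ℝ)+1) ∧ 4*c₂/c₁^ζ ≤ ((t:ℝ)+1)^(1-ζ) ∧
      ζ*B ≤ ((t:ℝ)+1)^ζ :=
    (htend1.eventually_ge_atTop c₂).and
      ((htend2.eventually_ge_atTop _).and (htend3.eventually_ge_atTop _))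
  obtain ⟨T₀, hT₀⟩ := Filter.eventually_atTop.mp hev
  have hthr : ∀ t, T₀ ≤ t → c₂ ≤ ((s t:ℝ)+1) ∧ 4*c₂/c₁^ζ ≤ ((s t:ℝ)+1)^(1-ζ) ∧
      ζ*B ≤ ((s t:ℝ)+1)^ζ := by
    intro t ht
    obtain ⟨h1, h2, h3⟩ := hT₀ t ht
    refine ⟨le_trans h1 (hx1 t), le_trans h2 ?_, le_trans h3 ?_⟩
    · exact Real.rpow_le_rpow (by positivity) (hx1 t) (by linarith)
    · exact Real.rpow_le_rpow (by positivity) (hx1 t) hζ0.le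
  -- key inequality: c₂ / x t ≤ α^ζ / 4
  have hq : ∀ t, T₀ ≤ t → c₂/((s t:ℝ)+1) ≤ α (s t)^ζ/4 := by
    intro t ht
    obtain ⟨h1, h2, h3⟩ := hthr t ht
    have hxx : ((s t:ℝ)+1)^(1-ζ) * ((s t:ℝ)+1)^ζ = (s t:ℝ)+1 := by
      rw [← Real.rpow_add (hxpos t)]; norm_num
    have h4 : 4*c₂/c₁^ζ * ((s t:ℝ)+1)^ζ ≤ (s t:ℝ)+1 := by
      have h4' := mul_le_mul_of_nonneg_right h2 (hypos t).le
      rwa [hxx] at h4'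
    have h5 : c₂/((s t:ℝ)+1) ≤ c₁^ζ/(4*((s t:ℝ)+1)^ζ) := by
      rw [div_le_div_iff₀ (hxpos t) (by positivity)]
      have h6 := mul_le_mul_of_nonneg_left h4 hc1z.le
      have h7 : c₁^ζ*(4*c₂/c₁^ζ*((s t:ℝ)+1)^ζ) = c₂*(4*((s t:ℝ)+1)^ζ) := by
        field_simp
      linarith
    have h7 := hpow_lb t
    calc c₂/((s t:ℝ)+1) ≤ c₁^ζ/(4*((s t:ℝ)+1)^ζ) := h5
      _ = (c₁^ζ/((s t:ℝ)+1)^ζ)/4 := by ring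
      _ ≤ α (s t)^ζ/4 := by linarith
  -- E bounds
  have hE1 : ∀ t, T₀ ≤ t → α (s t)^ζ/2 ≤ a t := by
    intro t ht
    have h1 := hAlb t
    have h2 : α (s (t+1)) ≤ c₂/((s t:ℝ)+1) := by
      have h3 := (hα (s (t+1))).2
      have h4 : c₂/((s (t+1):ℝ)+1) ≤ c₂/((s t:ℝ)+1) := by
        gcongr
        exact_mod_cast (hsmono t).le
      linarith
    have h5 := hq t ht
    have h0 : (0:ℝ) < α (s t)^ζ := Real.rpow_pos_of_pos (hαpos _) ζ
    linarith
  have hE2 : ∀ t, T₀ ≤ t → a t ≤ α (s t)^ζ := fun t ht => hAub t (hthr t ht).1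
  -- recursion steps for the logarithm
  have hstep_ub : ∀ t, T₀ ≤ t →
      Real.log ((s (t+1):ℝ)+1) - Real.log ((s t:ℝ)+1) ≤ B/((s t:ℝ)+1)^ζ := by
    intro t ht
    have h1 := halb' t
    have h2 := hE2 t ht
    have h3 := hpow_ub t
    have h4 : c₁ * (Real.log ((s (t+1):ℝ)+1) - Real.log ((s t:ℝ)+1)) ≤
        c₂^ζ/((s t:ℝ)+1)^ζ := by linarith
    rw [hBdef, div_div]
    rw [le_div_iff₀ (by positivity)]
    have h5 := mul_le_mul_of_nonneg_right h4 (hypos t).le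
    rw [div_mul_cancel₀ _ (ne_of_gt (hypos t))] at h5
    nlinarith [h5]
  have hstep_lb : ∀ t, T₀ ≤ t →
      A/((s t:ℝ)+1)^ζ ≤ Real.log ((s (t+1):ℝ)+1) - Real.log ((s t:ℝ)+1) := by
    intro t ht
    have h1 := haub' t
    have h2 := hE1 t ht
    have h3 := hq t ht
    have h4 := hpow_lb t
    have h5 : α (s t)^ζ/4 ≤ c₂ * (Real.log ((s (t+1):ℝ)+1) - Real.log ((s t:ℝ)+1)) := by
      have h6 : c₂ * (1/((s t:ℝ)+1)) = c₂/((s t:ℝ)+1) := mul_one_div _ _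
      nlinarith [h1, h2, h3]
    rw [hAdef, div_div]
    rw [div_le_iff₀ (by positivity)]
    have h7 : c₁^ζ/((s t:ℝ)+1)^ζ ≤ 4 * (c₂ * (Real.log ((s (t+1):ℝ)+1) - Real.log ((s t:ℝ)+1))) := by
      linarith
    have h8 := mul_le_mul_of_nonneg_right h7 (hypos t).le
    rw [div_mul_cancel₀ _ (ne_of_gt (hypos t))] at h8
    nlinarith [h8]
  -- recursion for y t = x t ^ ζ
  have hystep_lb : ∀ t, T₀ ≤ t → ((s t:ℝ)+1)^ζ + ζ*A ≤ ((s (t+1):ℝ)+1)^ζ := by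
    intro t ht
    have hstep := hstep_lb t ht
    have hy := hypos t
    have hxd0 : ((s t:ℝ)+1)^ζ = Real.exp (Real.log ((s t:ℝ)+1) * ζ) :=
      Real.rpow_def_of_pos (hxpos t) ζ
    have hxd1 : ((s (t+1):ℝ)+1)^ζ = Real.exp (Real.log ((s (t+1):ℝ)+1) * ζ) :=
      Real.rpow_def_of_pos (hxpos (t+1)) ζ
    have h1 : Real.exp ((Real.log ((s t:ℝ)+1) + A/((s t:ℝ)+1)^ζ) * ζ) ≤
        Real.exp (Real.log ((s (t+1):ℝ)+1) * ζ) := by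
      apply Real.exp_le_exp.mpr
      nlinarith [hstep]
    have h2 : (Real.log ((s t:ℝ)+1) + A/((s t:ℝ)+1)^ζ) * ζ =
        Real.log ((s t:ℝ)+1) * ζ + ζ*A/((s t:ℝ)+1)^ζ := by ring
    rw [h2, Real.exp_add, ← hxd0] at h1
    have h3 : ζ*A/((s t:ℝ)+1)^ζ + 1 ≤ Real.exp (ζ*A/((s t:ℝ)+1)^ζ) :=
      Real.add_one_le_exp _
    have h4 : ((s t:ℝ)+1)^ζ * (ζ*A/((s t:ℝ)+1)^ζ) = ζ*A := by
      field_simp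
    rw [hxd1]
    nlinarith [h1, h3, h4, hy]
  have hystep_ub : ∀ t, T₀ ≤ t →
      ((s (t+1):ℝ)+1)^ζ ≤ ((s t:ℝ)+1)^ζ + Real.exp 1 * (ζ*B) := by
    intro t ht
    have hstep := hstep_ub t ht
    have hy := hypos t
    have hzB := (hthr t ht).2.2
    have hxd0 : ((s t:ℝ)+1)^ζ = Real.exp (Real.log ((s t:ℝ)+1) * ζ) :=
      Real.rpow_def_of_pos (hxpos t) ζ
    have hxd1 : ((s (t+1):ℝ)+1)^ζ = Real.exp (Real.log ((s (t+1):ℝ)+1) * ζ) :=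
      Real.rpow_def_of_pos (hxpos (t+1)) ζ
    have h1 : Real.exp (Real.log ((s (t+1):ℝ)+1) * ζ) ≤
        Real.exp ((Real.log ((s t:ℝ)+1) + B/((s t:ℝ)+1)^ζ) * ζ) := by
      apply Real.exp_le_exp.mpr
      nlinarith [hstep]
    have h2 : (Real.log ((s t:ℝ)+1) + B/((s t:ℝ)+1)^ζ) * ζ =
        Real.log ((s t:ℝ)+1) * ζ + ζ*B/((s t:ℝ)+1)^ζ := by ring
    rw [h2, Real.exp_add, ← hxd0] at h1
    have hz0 : 0 ≤ ζ*B/((s t:ℝ)+1)^ζ := by positivity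
    have hz1 : ζ*B/((s t:ℝ)+1)^ζ ≤ 1 := by
      rw [div_le_one hy]; exact hzB
    have h3 := aux_exp_le hz0 hz1
    have h4 : ((s t:ℝ)+1)^ζ * (ζ*B/((s t:ℝ)+1)^ζ) = ζ*B := by
      field_simp
    rw [hxd1]
    nlinarith [h1, h3, h4, hy, Real.exp_pos 1]
  -- linear growth of y
  have hyline : ∀ t, T₀ ≤ t →
      ((s T₀:ℝ)+1)^ζ + ζ*A*((t:ℝ) - (T₀:ℝ)) ≤ ((s t:ℝ)+1)^ζ ∧
      ((s t:ℝ)+1)^ζ ≤ ((s T₀:ℝ)+1)^ζ + Real.exp 1*(ζ*B)*((t:ℝ) - (T₀:ℝ)) := by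
    intro t ht
    induction t, ht using Nat.le_induction with
    | base =>
      rw [sub_self, mul_zero, mul_zero, add_zero]
      exact ⟨le_refl _, le_refl _⟩
    | succ n hn ih =>
      have h1 := hystep_lb n hn
      have h2 := hystep_ub n hn
      push_cast
      constructor
      · nlinarith [ih.1]
      · nlinarith [ih.2]
  -- two-sided linear bounds with a single slope
  set P : ℝ := ζ*A/2 with hPdef
  set Q : ℝ := ((s T₀:ℝ)+1)^ζ + Real.exp 1*(ζ*B) with hQdef
  have hPpos : (0:ℝ) < P := by positivity
  have hQpos : (0:ℝ) < Q := by positivity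
  have hyPQ : ∀ t, 2*T₀+1 ≤ t →
      P*((t:ℝ)+1) ≤ ((s t:ℝ)+1)^ζ ∧ ((s t:ℝ)+1)^ζ ≤ Q*((t:ℝ)+1) := by
    intro t ht
    have ht0 : T₀ ≤ t := by omega
    obtain ⟨hl, hu⟩ := hyline t ht0
    have htc : (2*(T₀:ℝ)+1 : ℝ) ≤ (t:ℝ) := by
      have : ((2*T₀+1 : ℕ) : ℝ) ≤ (t:ℝ) := by exact_mod_cast ht
      push_cast at this
      linarith
    have hy0 : (0:ℝ) < ((s T₀:ℝ)+1)^ζ := hypos T₀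
    have hT0c : (0:ℝ) ≤ (T₀:ℝ) := Nat.cast_nonneg _
    constructor
    · rw [hPdef]
      nlinarith [hApos, hζ0]
    · rw [hQdef]
      nlinarith [hBpos, hζ0, Real.exp_pos 1, hT0c]
  -- x recovery
  have hζne : ζ ≠ 0 := ne_of_gt hζ0
  have hxrec : ∀ t : ℕ, (((s t:ℝ)+1)^ζ)^(1/ζ) = (s t:ℝ)+1 := by
    intro t
    rw [← Real.rpow_mul (hxpos t).le, mul_one_div, div_self hζne, Real.rpow_one]
  -- final constants
  set C₁0 : ℝ := P^(1/ζ)/2 with hC₁0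
  set C₂0 : ℝ := Q^(1/ζ) with hC₂0
  set D₁0 : ℝ := c₁^ζ/(2*Q) with hD₁0
  set D₂0 : ℝ := c₂^ζ/P with hD₂0
  have hC₁0pos : (0:ℝ) < C₁0 := by
    have := Real.rpow_pos_of_pos hPpos (1/ζ); positivity
  have hC₂0pos : (0:ℝ) < C₂0 := Real.rpow_pos_of_pos hQpos (1/ζ)
  have hD₁0pos : (0:ℝ) < D₁0 := by positivity
  have hD₂0pos : (0:ℝ) < D₂0 := by positivity
  refine ⟨min C₁0 C₂0, max C₁0 C₂0, min D₁0 D₂0, max D₁0 D₂0, 1/2, 1,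
    lt_min hC₁0pos hC₂0pos, le_trans (min_le_left _ _) (le_max_left _ _),
    lt_min hD₁0pos hD₂0pos, le_trans (min_le_left _ _) (le_max_left _ _),
    by norm_num, by norm_num, 2*T₀+1, ?_⟩
  intro t ht
  have ht0 : T₀ ≤ t := by omega
  obtain ⟨hyl, hyu⟩ := hyPQ t ht
  have htp : (0:ℝ) < (t:ℝ)+1 := by positivity
  have htr : (0:ℝ) < ((t:ℝ)+1)^(1/ζ) := Real.rpow_pos_of_pos htp _
  have hst1 : 1 ≤ s t := le_trans (by omega) (hts t)
  have hst1' : (1:ℝ) ≤ (s t:ℝ) := by exact_mod_cast hst1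
  refine ⟨⟨?_, ?_⟩, ⟨?_, ?_⟩, ⟨?_, ?_⟩⟩
  · -- lower s bound
    have h1 : (P*((t:ℝ)+1))^(1/ζ) ≤ (s t:ℝ)+1 := by
      rw [← hxrec t]
      exact Real.rpow_le_rpow (by positivity) hyl (by positivity)
    rw [Real.mul_rpow hPpos.le htp.le] at h1
    have h2 : min C₁0 C₂0 * ((t:ℝ)+1)^(1/ζ) ≤ C₁0 * ((t:ℝ)+1)^(1/ζ) :=
      mul_le_mul_of_nonneg_right (min_le_left _ _) htr.le
    rw [hC₁0] at h2 ⊢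
    -- C₁0 * r = P^(1/ζ) * r / 2 ≤ (x t)/2 ≤ s t  since s t ≥ 1
    have h3 : P^(1/ζ)/2 * ((t:ℝ)+1)^(1/ζ) ≤ ((s t:ℝ)+1)/2 := by linarith
    calc min (P^(1/ζ)/2) C₂0 * ((t:ℝ)+1)^(1/ζ)
        ≤ P^(1/ζ)/2 * ((t:ℝ)+1)^(1/ζ) := h2
      _ ≤ ((s t:ℝ)+1)/2 := h3
      _ ≤ (s t:ℝ) := by linarith
  · -- upper s bound
    have h1 : (s t:ℝ)+1 ≤ (Q*((t:ℝ)+1))^(1/ζ) := by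
      rw [← hxrec t]
      exact Real.rpow_le_rpow (hypos t).le hyu (by positivity)
    rw [Real.mul_rpow hQpos.le htp.le] at h1
    have h2 : C₂0 * ((t:ℝ)+1)^(1/ζ) ≤ max C₁0 C₂0 * ((t:ℝ)+1)^(1/ζ) :=
      mul_le_mul_of_nonneg_right (le_max_right _ _) htr.le
    rw [hC₂0] at h2
    linarith
  · -- lower a bound
    have h1 := hE1 t ht0
    have h2 := hpow_lb t
    have h3 : c₁^ζ/(2*(Q*((t:ℝ)+1))) ≤ c₁^ζ/(2*((s t:ℝ)+1)^ζ) := by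
      gcongr <;> linarith [hypos t]
    have h4 : min D₁0 D₂0 * ((t:ℝ)+1)⁻¹ ≤ D₁0 * ((t:ℝ)+1)⁻¹ :=
      mul_le_mul_of_nonneg_right (min_le_left _ _) (by positivity)
    have h5 : D₁0 * ((t:ℝ)+1)⁻¹ = c₁^ζ/(2*(Q*((t:ℝ)+1))) := by
      rw [hD₁0, ← div_eq_mul_inv, div_div, mul_assoc]
    have h6 : c₁^ζ/(2*((s t:ℝ)+1)^ζ) = (c₁^ζ/((s t:ℝ)+1)^ζ)/2 := by ring
    calc min D₁0 D₂0 * ((t:ℝ)+1)⁻¹ ≤ D₁0 * ((t:ℝ)+1)⁻¹ := h4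
      _ = c₁^ζ/(2*(Q*((t:ℝ)+1))) := h5
      _ ≤ c₁^ζ/(2*((s t:ℝ)+1)^ζ) := h3
      _ = (c₁^ζ/((s t:ℝ)+1)^ζ)/2 := h6
      _ ≤ α (s t)^ζ/2 := by linarith
      _ ≤ a t := h1
  · -- upper a bound
    have h1 := hE2 t ht0
    have h2 := hpow_ub t
    have h3 : c₂^ζ/((s t:ℝ)+1)^ζ ≤ c₂^ζ/(P*((t:ℝ)+1)) := by
      gcongr <;> linarith [mul_pos hPpos htp]
    have h4 : D₂0 * ((t:ℝ)+1)⁻¹ = c₂^ζ/(P*((t:ℝ)+1)) := by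
      rw [hD₂0, ← div_eq_mul_inv, div_div]
    have h5 : D₂0 * ((t:ℝ)+1)⁻¹ ≤ max D₁0 D₂0 * ((t:ℝ)+1)⁻¹ :=
      mul_le_mul_of_nonneg_right (le_max_right _ _) (by positivity)
    linarith
  · -- lower E bound
    have h1 := hE1 t ht0
    linarith
  · -- upper E bound
    have h1 := hE2 t ht0
    linarith
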